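/- Fix s > 0 and t ∈ [0,1), and define p(z) = 1 + 2(1−t)·Σ_{n≥1} (s/(s+n)) zⁿ for z in the open unit disk 𝔻. Then p(z) + (1/s)·z·p′(z) = 1 + 2(1−t)·z/(1−z) for all z ∈ 𝔻, and consequently inf_{z∈𝔻} Re[p(z) + (1/s)·z·p′(z)] = t. -/

import Mathlib

open Complex Set Metric

noncomputable def p (s t : ℝ) (z : ℂ) : ℂ :=
  1 + 2 * (1 - (t : ℂ)) * ∑' n : ℕ, ((s : ℂ) / (s + n + 1)) * z ^ (n + 1)

lemma coef_ne (s : ℝ) (hs : 0 < s) (n : ℕ) : ((s : ℂ) + n + 1) ≠ 0 := by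
  intro h
  have h2 := congrArg Complex.re h
  simp only [Complex.add_re, Complex.ofReal_re, Complex.natCast_re, Complex.one_re,
    Complex.zero_re] at h2
  have : (0:ℝ) ≤ (n:ℝ) := Nat.cast_nonneg n
  linarith

lemma coef_norm_le (s : ℝ) (hs : 0 < s) (n : ℕ) : ‖(s : ℂ) / (s + n + 1)‖ ≤ 1 := by
  have h1 : ((s : ℂ) + n + 1) = ((s + n + 1 : ℝ) : ℂ) := by push_cast; ring
  have hpos : (0:ℝ) < s + n + 1 := by positivity
  rw [h1, ← Complex.ofReal_div, Complex.norm_real, Real.norm_eq_abs, abs_of_pos (by positivity)]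
  rw [div_le_one hpos]
  have : (0:ℝ) ≤ (n:ℝ) := Nat.cast_nonneg n
  linarith

lemma summable_aux (r : ℝ) (hr0 : 0 ≤ r) (hr : r < 1) :
    Summable (fun n : ℕ => ((n : ℝ) + 1) * r ^ n) := by
  have h1 : Summable (fun n : ℕ => (n : ℝ) ^ 1 * r ^ n) :=
    summable_pow_mul_geometric_of_norm_lt_one 1 (by rwa [Real.norm_eq_abs, _root_.abs_of_nonneg hr0])
  have h2 : Summable (fun n : ℕ => r ^ n) := summable_geometric_of_lt_one hr0 hr
  have := h1.add h2
  refine this.congr fun n => ?_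
  ring

lemma hasDerivAt_p (s t : ℝ) (hs : 0 < s) {z : ℂ} (hz : ‖z‖ < 1) :
    HasDerivAt (p s t)
      (2 * (1 - (t : ℂ)) * ∑' n : ℕ, ((s : ℂ) / (s + n + 1)) * ((n : ℂ) + 1) * z ^ n) z := by
  set r : ℝ := (1 + ‖z‖) / 2 with hr
  have hzr : ‖z‖ < r := by rw [hr]; linarith
  have hr0 : 0 ≤ r := by positivity
  have hr1 : r < 1 := by rw [hr]; linarith
  have key : HasDerivAt (fun y : ℂ => ∑' n : ℕ, ((s : ℂ) / (s + n + 1)) * y ^ (n + 1))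
      (∑' n : ℕ, ((s : ℂ) / (s + n + 1)) * ((n : ℂ) + 1) * z ^ n) z := by
    refine hasDerivAt_tsum_of_isPreconnected (𝕜 := ℂ) (F := ℂ)
      (g := fun (n : ℕ) (y : ℂ) => ((s : ℂ) / (s + n + 1)) * y ^ (n + 1))
      (g' := fun (n : ℕ) (y : ℂ) => ((s : ℂ) / (s + n + 1)) * ((n : ℂ) + 1) * y ^ n)
      (u := fun n : ℕ => ((n : ℝ) + 1) * r ^ n) (y₀ := (0:ℂ))
      (summable_aux r hr0 hr1) (Metric.isOpen_ball (x := (0:ℂ)) (ε := r))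
      ((convex_ball (0:ℂ) r).isPreconnected) (fun n y _ => ?_) (fun n y hy => ?_)
      ?_ ?_ ?_
    · have h := (hasDerivAt_pow (n + 1) y).const_mul ((s : ℂ) / (s + n + 1))
      convert h using 1
      · rfl
      push_cast
      ring
    · rw [Metric.mem_ball, dist_zero_right] at hy
      calc ‖(s : ℂ) / (s + n + 1) * ((n : ℂ) + 1) * y ^ n‖
          = ‖(s : ℂ) / (s + n + 1)‖ * ‖(n : ℂ) + 1‖ * ‖y‖ ^ n := by
            rw [norm_mul, norm_mul, norm_pow]
        _ ≤ 1 * ((n : ℝ) + 1) * r ^ n := by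
            refine mul_le_mul (mul_le_mul (coef_norm_le s hs n) ?_ (norm_nonneg _) zero_le_one)
              (pow_le_pow_left₀ (norm_nonneg _) hy.le n) (by positivity) (by positivity)
            have : ((n : ℂ) + 1) = ((n + 1 : ℝ) : ℂ) := by push_cast; ring
            rw [this, Complex.norm_real, Real.norm_eq_abs, _root_.abs_of_nonneg (by positivity)]
        _ = ((n : ℝ) + 1) * r ^ n := by ring
    · exact Metric.mem_ball_self (by linarith [norm_nonneg z])
    · refine (summable_zero).congr fun n => ?_
      simp [zero_pow (Nat.succ_ne_zero n)]
    · rwa [Metric.mem_ball, dist_zero_right]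
  have := ((hasDerivAt_const z (1 : ℂ)).add (key.const_mul (2 * (1 - (t : ℂ)))))
  simp only [zero_add] at this
  exact this

lemma p_eq (s t : ℝ) (hs : 0 < s) {z : ℂ} (hz : ‖z‖ < 1) :
    p s t z + (1 / (s : ℂ)) * z * deriv (p s t) z = 1 + 2 * (1 - (t : ℂ)) * z / (1 - z) := by
  have hd := hasDerivAt_p s t hs hz
  rw [hd.deriv]
  have hsne : (s : ℂ) ≠ 0 := Complex.ofReal_ne_zero.mpr hs.ne'
  -- summability of A terms
  have hA : Summable (fun n : ℕ => ((s : ℂ) / (s + n + 1)) * z ^ (n + 1)) := by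
    refine Summable.of_norm_bounded (g := fun n => ‖z‖ ^ n) (summable_geometric_of_lt_one
      (norm_nonneg z) hz) fun n => ?_
    rw [norm_mul, norm_pow]
    calc ‖(s : ℂ) / (s + n + 1)‖ * ‖z‖ ^ (n + 1)
        ≤ 1 * ‖z‖ ^ (n + 1) := by
          exact mul_le_mul_of_nonneg_right (coef_norm_le s hs n) (by positivity)
      _ ≤ ‖z‖ ^ n := by
          rw [one_mul, pow_succ]
          nlinarith [pow_nonneg (norm_nonneg z) n, norm_nonneg z]
  have hB : Summable (fun n : ℕ => ((s : ℂ) / (s + n + 1)) * ((n : ℂ) + 1) * z ^ n) := by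
    refine Summable.of_norm_bounded (g := fun n => ((n : ℝ) + 1) * ‖z‖ ^ n)
      (summable_aux _ (norm_nonneg z) hz) fun n => ?_
    rw [norm_mul, norm_mul, norm_pow]
    have h1 : ‖(n : ℂ) + 1‖ = (n : ℝ) + 1 := by
      have : ((n : ℂ) + 1) = ((n + 1 : ℝ) : ℂ) := by push_cast; ring
      rw [this, Complex.norm_real, Real.norm_eq_abs, _root_.abs_of_nonneg (by positivity)]
    rw [h1]
    nlinarith [coef_norm_le s hs n, pow_nonneg (norm_nonneg z) n, norm_nonneg ((s:ℂ)/(s+n+1)),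
      mul_le_mul_of_nonneg_right (coef_norm_le s hs n)
        (by positivity : (0:ℝ) ≤ ((n:ℝ)+1) * ‖z‖ ^ n)]
  have hAs := hA.hasSum
  have hBs := hB.hasSum
  set A := ∑' n : ℕ, ((s : ℂ) / (s + n + 1)) * z ^ (n + 1) with hAdef
  set B := ∑' n : ℕ, ((s : ℂ) / (s + n + 1)) * ((n : ℂ) + 1) * z ^ n with hBdef
  have hC : HasSum (fun n : ℕ => (((n : ℂ) + 1) / (s + n + 1)) * z ^ (n + 1))
      ((1 / (s : ℂ)) * z * B) := by
    have := hBs.mul_left ((1 / (s : ℂ)) * z)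
    refine this.congr_fun fun n => ?_
    have hne := coef_ne s hs n
    field_simp
    ring
  have hsum : HasSum (fun n : ℕ => z ^ (n + 1)) (A + (1 / (s : ℂ)) * z * B) := by
    have := hAs.add hC
    refine this.congr_fun fun n => ?_
    have hne := coef_ne s hs n
    field_simp
    ring
  have hgeo : HasSum (fun n : ℕ => z ^ (n + 1)) (z * (1 - z)⁻¹) := by
    have := (hasSum_geometric_of_norm_lt_one hz).mul_left z
    refine this.congr_fun fun n => ?_
    rw [pow_succ']
  have heq : A + (1 / (s : ℂ)) * z * B = z * (1 - z)⁻¹ := hsum.unique hgeo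
  have : p s t z + (1 / (s : ℂ)) * z * (2 * (1 - (t : ℂ)) * B)
      = 1 + 2 * (1 - (t : ℂ)) * (A + (1 / (s : ℂ)) * z * B) := by
    simp only [p, ← hAdef]
    ring
  rw [this, heq, div_eq_mul_inv]
  ring

theorem p_identity_and_inf (s t : ℝ) (hs : 0 < s) (ht : t ∈ Set.Ico (0:ℝ) 1) :
    (∀ z ∈ Metric.ball (0 : ℂ) 1,
      p s t z + (1 / (s : ℂ)) * z * deriv (p s t) z = 1 + 2 * (1 - (t : ℂ)) * z / (1 - z)) ∧
    sInf ((fun z => (p s t z + (1 / (s : ℂ)) * z * deriv (p s t) z).re) '' Metric.ball (0 : ℂ) 1)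
      = t := by
  obtain ⟨ht0, ht1⟩ := ht
  have hident : ∀ z ∈ Metric.ball (0 : ℂ) 1,
      p s t z + (1 / (s : ℂ)) * z * deriv (p s t) z = 1 + 2 * (1 - (t : ℂ)) * z / (1 - z) := by
    intro z hz
    rw [Metric.mem_ball, dist_zero_right] at hz
    exact p_eq s t hs hz
  refine ⟨hident, ?_⟩
  have himg : ((fun z => (p s t z + (1 / (s : ℂ)) * z * deriv (p s t) z).re) '' Metric.ball (0 : ℂ) 1)
      = ((fun z : ℂ => ((1 : ℂ) + 2 * (1 - (t : ℂ)) * z / (1 - z)).re) '' Metric.ball (0 : ℂ) 1) := by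
    apply Set.image_congr
    intro z hz
    rw [hident z hz]
  rw [himg]
  -- lower bound
  have hlow : ∀ z ∈ Metric.ball (0 : ℂ) 1,
      t ≤ ((1 : ℂ) + 2 * (1 - (t : ℂ)) * z / (1 - z)).re := by
    intro z hz
    rw [Metric.mem_ball, dist_zero_right] at hz
    set x := z.re
    set y := z.im
    have hxy : x ^ 2 + y ^ 2 < 1 := by
      have := Complex.sq_norm z
      have h2 : ‖z‖ < 1 := hz
      nlinarith [Complex.normSq_apply z, Complex.sq_norm z, norm_nonneg z]
    have hN : 0 < (1 - x) ^ 2 + y ^ 2 := by nlinarith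
    have hre : (((2 : ℂ) * (1 - (t : ℂ)) * z / (1 - z))).re
        = 2 * (1 - t) * ((x * (1 - x) - y * y) / ((1 - x) ^ 2 + y ^ 2)) := by
      rw [Complex.div_re]
      simp [Complex.normSq_apply, Complex.sub_re, Complex.sub_im, Complex.mul_re, Complex.mul_im,
        Complex.ofReal_re, Complex.ofReal_im, x, y]
      ring
    have : ((1 : ℂ) + 2 * (1 - (t : ℂ)) * z / (1 - z)).re
        = 1 + 2 * (1 - t) * ((x * (1 - x) - y * y) / ((1 - x) ^ 2 + y ^ 2)) := by
      rw [Complex.add_re, Complex.one_re, hre]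
    rw [this]
    have key : 1 + 2 * (1 - t) * ((x * (1 - x) - y * y) / ((1 - x) ^ 2 + y ^ 2)) - t
        = (1 - t) * ((1 - x ^ 2 - y ^ 2) / ((1 - x) ^ 2 + y ^ 2)) := by
      field_simp
      ring
    have hpos2 : 0 ≤ (1 - t) * ((1 - x ^ 2 - y ^ 2) / ((1 - x) ^ 2 + y ^ 2)) :=
      mul_nonneg (by linarith) (div_nonneg (by nlinarith) hN.le)
    linarith
  have hne : ((fun z : ℂ => ((1 : ℂ) + 2 * (1 - (t : ℂ)) * z / (1 - z)).re) ''
      Metric.ball (0 : ℂ) 1).Nonempty :=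
    ⟨_, Set.mem_image_of_mem _ (Metric.mem_ball_self one_pos)⟩
  have hbdd : BddBelow ((fun z : ℂ => ((1 : ℂ) + 2 * (1 - (t : ℂ)) * z / (1 - z)).re) ''
      Metric.ball (0 : ℂ) 1) := by
    refine ⟨t, ?_⟩
    rintro v ⟨z, hz, rfl⟩
    exact hlow z hz
  refine le_antisymm ?_ (le_csInf hne (by rintro v ⟨z, hz, rfl⟩; exact hlow z hz))
  -- upper bound: sInf ≤ t
  refine le_of_forall_pos_le_add fun ε hε => ?_
  -- pick x ∈ [0,1) with value ≤ t + ε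
  set x : ℝ := max 0 (1 - ε / (1 - t)) with hxdef
  have hx0 : 0 ≤ x := le_max_left _ _
  have hx1 : x < 1 := by
    rw [hxdef]
    apply max_lt one_pos
    have : 0 < ε / (1 - t) := div_pos hε (by linarith)
    linarith
  have hmem : (-(x : ℂ)) ∈ Metric.ball (0 : ℂ) 1 := by
    rw [Metric.mem_ball, dist_zero_right, norm_neg, Complex.norm_real, Real.norm_eq_abs,
      _root_.abs_of_nonneg hx0]
    exact hx1
  have hval : ((1 : ℂ) + 2 * (1 - (t : ℂ)) * (-(x : ℂ)) / (1 - (-(x : ℂ)))).re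
      = 1 - 2 * (1 - t) * x / (1 + x) := by
    have h1 : ((1 : ℂ) + 2 * (1 - (t : ℂ)) * (-(x : ℂ)) / (1 - (-(x : ℂ))))
        = ((1 - 2 * (1 - t) * x / (1 + x) : ℝ) : ℂ) := by
      push_cast
      ring
    rw [h1, Complex.ofReal_re]
  have hvle : 1 - 2 * (1 - t) * x / (1 + x) ≤ t + ε := by
    have h1x : (0:ℝ) < 1 + x := by linarith
    have key : 1 - 2 * (1 - t) * x / (1 + x) - t = (1 - t) * (1 - x) / (1 + x) := by
      field_simp
      ring
    have hle1 : (1 - t) * (1 - x) / (1 + x) ≤ (1 - t) * (1 - x) := by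
      rw [div_le_iff₀ h1x]
      nlinarith [mul_nonneg (by linarith : (0:ℝ) ≤ 1 - t) (by linarith : (0:ℝ) ≤ 1 - x), hx0]
    have hle2 : (1 - t) * (1 - x) ≤ ε := by
      have hx' : 1 - ε / (1 - t) ≤ x := le_max_right _ _
      have h1t : (0:ℝ) < 1 - t := by linarith
      have : 1 - x ≤ ε / (1 - t) := by linarith
      calc (1 - t) * (1 - x) ≤ (1 - t) * (ε / (1 - t)) :=
        mul_le_mul_of_nonneg_left this h1t.le
        _ = ε := by field_simp
    linarith
  calc sInf _ ≤ ((1 : ℂ) + 2 * (1 - (t : ℂ)) * (-(x : ℂ)) / (1 - (-(x : ℂ)))).re :=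
        csInf_le hbdd (Set.mem_image_of_mem _ hmem)
    _ ≤ t + ε := by rw [hval]; exact hvle
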